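/- Fix a nonzero real number λ and integers m ≥ 0, r ≥ 0. For every real number x, the series Σ_{n=0}^{∞} (n+r)_{m,λ} x^n / n! converges absolutely, and Σ_{k=0}^{m} {m+r brace k+r}_{r,λ} x^k = e^{−x} · Σ_{n=0}^{∞} (n+r)_{m,λ} x^n / n! (the left-hand side is the degenerate r-Bell polynomial φ^{(r)}_{m,λ}(x)). -/

import Mathlib

open Finset

noncomputable section

/-- The degenerate falling factorial `(x)_{n,λ} = x(x-λ)⋯(x-(n-1)λ)`. -/
def dff (lam x : ℝ) (n : ℕ) : ℝ := ∏ i ∈ Finset.range n, (x - i * lam)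

/-- The ordinary falling factorial `(x)_n = x(x-1)⋯(x-n+1)`. -/
def ff (x : ℝ) (n : ℕ) : ℝ := ∏ i ∈ Finset.range n, (x - i)

lemma ff_fact : ∀ (k n : ℕ), ff (↑(n + k)) k * (n.factorial : ℝ) = ((n + k).factorial : ℝ) := by
  intro k
  induction k with
  | zero => intro n; simp [ff]
  | succ k ih =>
    intro n
    have h1 : ff (↑(n + (k + 1))) (k + 1) = ff (↑(n + (k + 1))) k * ((n : ℝ) + 1) := by
      rw [ff, Finset.prod_range_succ, ← ff]
      push_cast; ring_nf
    have h2 : (↑(n + (k + 1)) : ℝ) = (↑((n + 1) + k) : ℝ) := by push_cast; ring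
    have := ih (n + 1)
    rw [h1, h2]
    have hfac : ((n + 1).factorial : ℝ) = ((n : ℝ) + 1) * (n.factorial : ℝ) := by
      rw [Nat.factorial_succ]; push_cast; ring
    calc ff (↑(n + 1 + k)) k * ((n : ℝ) + 1) * (n.factorial : ℝ)
        = ff (↑(n + 1 + k)) k * ((n + 1).factorial : ℝ) := by rw [hfac]; ring
      _ = ((n + 1 + k).factorial : ℝ) := this
      _ = ((n + (k + 1)).factorial : ℝ) := by ring_nf

lemma ff_zero_of_lt {n k : ℕ} (h : n < k) : ff (n : ℝ) k = 0 := by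
  apply Finset.prod_eq_zero (Finset.mem_range.mpr h)
  simp

lemma ff_nonneg (n k : ℕ) : 0 ≤ ff (n : ℝ) k := by
  rcases lt_or_ge n k with h | h
  · rw [ff_zero_of_lt h]
  · apply Finset.prod_nonneg
    intro i hi
    have : (i : ℝ) ≤ (n : ℝ) := by exact_mod_cast le_trans (Finset.mem_range.mp hi).le h
    linarith

lemma exp_tsum (x : ℝ) : ∑' n : ℕ, x ^ n / n.factorial = Real.exp x := by
  rw [Real.exp_eq_exp_ℝ, NormedSpace.exp_eq_tsum_div]

lemma key (k : ℕ) (x : ℝ) :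
    Summable (fun n : ℕ => ff (n : ℝ) k * x ^ n / n.factorial) ∧
    ∑' n : ℕ, ff (n : ℝ) k * x ^ n / n.factorial = x ^ k * Real.exp x := by
  set g : ℕ → ℝ := fun n => ff (n : ℝ) k * x ^ n / n.factorial with hg
  have hshift : ∀ n : ℕ, g (n + k) = x ^ k * (x ^ n / n.factorial) := by
    intro n
    have hfac : (n.factorial : ℝ) ≠ 0 := by exact_mod_cast n.factorial_ne_zero
    have hfac2 : ((n + k).factorial : ℝ) ≠ 0 := by exact_mod_cast (n + k).factorial_ne_zero
    have hff : ff (↑(n + k)) k = ((n + k).factorial : ℝ) / n.factorial := by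
      field_simp [← ff_fact k n]
      exact ff_fact k n
    simp only [hg, hff]
    field_simp
    rw [pow_add]
    ring
  have hsum_shift : Summable (fun n => g (n + k)) := by
    simp only [hshift]
    exact (Real.summable_pow_div_factorial x).mul_left _
  have hsum : Summable g := (summable_nat_add_iff k).mp hsum_shift
  refine ⟨hsum, ?_⟩
  have := (Summable.sum_add_tsum_nat_add k hsum).symm
  have hzero : ∑ i ∈ Finset.range k, g i = 0 := by
    apply Finset.sum_eq_zero
    intro i hi
    simp [hg, ff_zero_of_lt (Finset.mem_range.mp hi)]
  rw [this, hzero, zero_add]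
  calc ∑' n : ℕ, g (n + k) = ∑' n : ℕ, x ^ k * (x ^ n / n.factorial) := by
        exact tsum_congr hshift
    _ = x ^ k * ∑' n : ℕ, x ^ n / n.factorial := tsum_mul_left
    _ = x ^ k * Real.exp x := by rw [exp_tsum]

/-- for every real `x`, the series `∑_{n=0}^∞ (n+r)_{m,λ} x^n / n!` converges
absolutely and `φ^{(r)}_{m,λ}(x) = ∑_{k=0}^m {m+r brace k+r}_{r,λ} x^k
 = e^{-x} ∑_{n=0}^∞ (n+r)_{m,λ} x^n / n!`, where `S n k` denotes the degenerate
`r`-Stirling number of the second kind `{n+r brace k+r}_{r,λ}`, characterized by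
`(x+r)_{n,λ} = ∑_{k=0}^n S n k (x)_k`. -/
theorem statement_4 (lam : ℝ) (hlam : lam ≠ 0) (m r : ℕ)
    (S : ℕ → ℕ → ℝ)
    (hS : ∀ (n : ℕ) (x : ℝ), dff lam (x + r) n = ∑ k ∈ Finset.range (n + 1), S n k * ff x k)
    (x : ℝ) :
    Summable (fun n : ℕ => |dff lam ((n : ℝ) + r) m * x ^ n / n.factorial|) ∧
    ∑ k ∈ Finset.range (m + 1), S m k * x ^ k =
      Real.exp (-x) * ∑' n : ℕ, dff lam ((n : ℝ) + r) m * x ^ n / n.factorial := by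
  have hF : ∀ n : ℕ, dff lam ((n : ℝ) + r) m * x ^ n / n.factorial =
      ∑ k ∈ Finset.range (m + 1), S m k * (ff (n : ℝ) k * x ^ n / n.factorial) := by
    intro n
    rw [hS m (n : ℝ), Finset.sum_mul, Finset.sum_div]
    apply Finset.sum_congr rfl
    intro k _
    ring
  -- absolute summability
  have habs : Summable (fun n : ℕ => |dff lam ((n : ℝ) + r) m * x ^ n / n.factorial|) := by
    have hbig : Summable (fun n : ℕ =>
        ∑ k ∈ Finset.range (m + 1), |S m k| * (ff (n : ℝ) k * |x| ^ n / n.factorial)) := by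
      exact summable_sum (fun k _ => ((key k |x|).1).mul_left _)
    refine Summable.of_nonneg_of_le (fun n => abs_nonneg _) (fun n => ?_) hbig
    rw [hF n]
    calc |∑ k ∈ Finset.range (m + 1), S m k * (ff (n : ℝ) k * x ^ n / n.factorial)|
        ≤ ∑ k ∈ Finset.range (m + 1), |S m k * (ff (n : ℝ) k * x ^ n / n.factorial)| :=
          Finset.abs_sum_le_sum_abs _ _
      _ ≤ ∑ k ∈ Finset.range (m + 1), |S m k| * (ff (n : ℝ) k * |x| ^ n / n.factorial) := by
          apply Finset.sum_le_sum
          intro k _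
          rw [abs_mul, abs_div, abs_mul, abs_pow,
            abs_of_nonneg (ff_nonneg n k), Nat.abs_cast]
  refine ⟨habs, ?_⟩
  have hterm : ∀ k ∈ Finset.range (m + 1),
      Summable (fun n : ℕ => S m k * (ff (n : ℝ) k * x ^ n / n.factorial)) := by
    intro k _
    exact ((key k x).1).mul_left _
  have htsum : ∑' n : ℕ, dff lam ((n : ℝ) + r) m * x ^ n / n.factorial =
      Real.exp x * ∑ k ∈ Finset.range (m + 1), S m k * x ^ k := by
    calc ∑' n : ℕ, dff lam ((n : ℝ) + r) m * x ^ n / n.factorial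
        = ∑' n : ℕ, ∑ k ∈ Finset.range (m + 1),
            S m k * (ff (n : ℝ) k * x ^ n / n.factorial) := tsum_congr hF
      _ = ∑ k ∈ Finset.range (m + 1), ∑' n : ℕ,
            S m k * (ff (n : ℝ) k * x ^ n / n.factorial) := Summable.tsum_finsetSum hterm
      _ = ∑ k ∈ Finset.range (m + 1), S m k * (x ^ k * Real.exp x) := by
          apply Finset.sum_congr rfl
          intro k _
          rw [tsum_mul_left, (key k x).2]
      _ = Real.exp x * ∑ k ∈ Finset.range (m + 1), S m k * x ^ k := by
          rw [Finset.mul_sum]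
          apply Finset.sum_congr rfl
          intro k _
          ring
  rw [htsum, ← mul_assoc, ← Real.exp_add]
  simp

end
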